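/- In the four-detector binomial routing model with efficiencies η0 = η1 ∈ (0,1), η+ = η- ∈ (0,1), and dark count probabilities d0,d1,d+,d- ∈ [0,1), suppose each of k photons goes independently to the pair (D0,D1) or (D+,D-) with probability 1/2 each, then within each pair is routed by the Born-rule probabilities of an arbitrary k-qubit state ρ. If Bob reports basis 0 when at least one of D0,D1 clicks and neither D+,D- clicks (and symmetrically for basis 1), then P_report(1,0|ρ,k) = (1-d+)(1-d-)(1-η+/2)^k - Π_i(1-d_i)·(1-(η0+η+)/2)^k and P_report(1,1|ρ,k) = (1-d0)(1-d1)(1-η0/2)^k - Π_i(1-d_i)·(1-(η0+η+)/2)^k, independently of ρ. -/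

import Mathlib

open Finset

private lemma bin_sum (k : ℕ) (x y : ℝ) :
    ∑ j ∈ range (k+1), (k.choose j : ℝ) * x^j * y^(k-j) = (x+y)^k := by
  rw [add_pow]
  exact Finset.sum_congr rfl (fun j _ => by ring)

private lemma arm_sum (k : ℕ) (u v c0 c1 cp cm : ℝ) (Q : ℕ → ℕ → ℕ → ℝ)
    (hQsum : ∀ k01 ∈ Finset.range (k+1),
      ∑ k0 ∈ Finset.range (k01+1), ∑ kp ∈ Finset.range (k-k01+1),
        Q k01 k0 kp = 1) :
    ∑ k01 ∈ range (k+1), ∑ k0 ∈ range (k01+1), ∑ kp ∈ range (k-k01+1),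
      ((1/2:ℝ)^k * (k.choose k01 : ℝ) * Q k01 k0 kp) *
        ((1 - (c0*u^k0)*(c1*u^(k01-k0))) * ((cp*v^kp)*(cm*v^(k-k01-kp))))
    = cp*cm*((1+v)/2)^k - c0*c1*cp*cm*((u+v)/2)^k := by
  have key : ∀ k01 ∈ range (k+1),
      ∑ k0 ∈ range (k01+1), ∑ kp ∈ range (k-k01+1),
        ((1/2:ℝ)^k * (k.choose k01 : ℝ) * Q k01 k0 kp) *
          ((1 - (c0*u^k0)*(c1*u^(k01-k0))) * ((cp*v^kp)*(cm*v^(k-k01-kp))))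
      = (1/2:ℝ)^k * (k.choose k01 : ℝ) *
          ((1 - c0*c1*u^k01) * (cp*cm*v^(k-k01))) := by
    intro k01 hk01
    have hstep : ∑ k0 ∈ range (k01+1), ∑ kp ∈ range (k-k01+1),
        ((1/2:ℝ)^k * (k.choose k01 : ℝ) * Q k01 k0 kp) *
          ((1 - (c0*u^k0)*(c1*u^(k01-k0))) * ((cp*v^kp)*(cm*v^(k-k01-kp))))
        = ∑ k0 ∈ range (k01+1), ∑ kp ∈ range (k-k01+1),
            ((1/2:ℝ)^k * (k.choose k01 : ℝ) *
              ((1 - c0*c1*u^k01) * (cp*cm*v^(k-k01)))) * Q k01 k0 kp := by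
      refine Finset.sum_congr rfl fun k0 hk0 => Finset.sum_congr rfl fun kp hkp => ?_
      have h1 : u^k0 * u^(k01-k0) = u^k01 := by
        rw [← pow_add, Nat.add_sub_cancel' (Nat.lt_succ_iff.mp (Finset.mem_range.mp hk0))]
      have h2 : v^kp * v^(k-k01-kp) = v^(k-k01) := by
        rw [← pow_add, Nat.add_sub_cancel' (Nat.lt_succ_iff.mp (Finset.mem_range.mp hkp))]
      calc ((1/2:ℝ)^k * (k.choose k01 : ℝ) * Q k01 k0 kp) *
            ((1 - (c0*u^k0)*(c1*u^(k01-k0))) * ((cp*v^kp)*(cm*v^(k-k01-kp))))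
          = ((1/2:ℝ)^k * (k.choose k01 : ℝ) *
              ((1 - c0*c1*(u^k0*u^(k01-k0))) * (cp*cm*(v^kp*v^(k-k01-kp))))) * Q k01 k0 kp := by
            ring
        _ = _ := by rw [h1, h2]
    rw [hstep]
    simp only [← Finset.mul_sum]
    rw [hQsum k01 hk01, mul_one]
  rw [Finset.sum_congr rfl key]
  have hsplit : ∀ k01 ∈ range (k+1),
      (1/2:ℝ)^k * (k.choose k01 : ℝ) * ((1 - c0*c1*u^k01) * (cp*cm*v^(k-k01)))
      = (cp*cm*(1/2:ℝ)^k) * ((k.choose k01 : ℝ) * 1^k01 * v^(k-k01))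
        - (c0*c1*cp*cm*(1/2:ℝ)^k) * ((k.choose k01 : ℝ) * u^k01 * v^(k-k01)) := by
    intro k01 _; ring
  rw [Finset.sum_congr rfl hsplit, Finset.sum_sub_distrib, ← Finset.mul_sum, ← Finset.mul_sum,
    bin_sum, bin_sum]
  have e1 : ((1:ℝ)+v)/2 = (1/2) * (1+v) := by ring
  have e2 : (u+v)/2 = (1/2:ℝ) * (u+v) := by ring
  rw [e1, e2, mul_pow, mul_pow]
  ring

private lemma arm_sum' (k : ℕ) (u v c0 c1 cp cm : ℝ) (Q : ℕ → ℕ → ℕ → ℝ)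
    (hQsum : ∀ k01 ∈ Finset.range (k+1),
      ∑ k0 ∈ Finset.range (k01+1), ∑ kp ∈ Finset.range (k-k01+1),
        Q k01 k0 kp = 1) :
    ∑ k01 ∈ range (k+1), ∑ k0 ∈ range (k01+1), ∑ kp ∈ range (k-k01+1),
      ((1/2:ℝ)^k * (k.choose k01 : ℝ) * Q k01 k0 kp) *
        ((1 - (cp*v^kp)*(cm*v^(k-k01-kp))) * ((c0*u^k0)*(c1*u^(k01-k0))))
    = c0*c1*((u+1)/2)^k - c0*c1*cp*cm*((u+v)/2)^k := by
  have key : ∀ k01 ∈ range (k+1),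
      ∑ k0 ∈ range (k01+1), ∑ kp ∈ range (k-k01+1),
        ((1/2:ℝ)^k * (k.choose k01 : ℝ) * Q k01 k0 kp) *
          ((1 - (cp*v^kp)*(cm*v^(k-k01-kp))) * ((c0*u^k0)*(c1*u^(k01-k0))))
      = (1/2:ℝ)^k * (k.choose k01 : ℝ) *
          ((1 - cp*cm*v^(k-k01)) * (c0*c1*u^k01)) := by
    intro k01 hk01
    have hstep : ∑ k0 ∈ range (k01+1), ∑ kp ∈ range (k-k01+1),
        ((1/2:ℝ)^k * (k.choose k01 : ℝ) * Q k01 k0 kp) *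
          ((1 - (cp*v^kp)*(cm*v^(k-k01-kp))) * ((c0*u^k0)*(c1*u^(k01-k0))))
        = ∑ k0 ∈ range (k01+1), ∑ kp ∈ range (k-k01+1),
            ((1/2:ℝ)^k * (k.choose k01 : ℝ) *
              ((1 - cp*cm*v^(k-k01)) * (c0*c1*u^k01))) * Q k01 k0 kp := by
      refine Finset.sum_congr rfl fun k0 hk0 => Finset.sum_congr rfl fun kp hkp => ?_
      have h1 : u^k0 * u^(k01-k0) = u^k01 := by
        rw [← pow_add, Nat.add_sub_cancel' (Nat.lt_succ_iff.mp (Finset.mem_range.mp hk0))]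
      have h2 : v^kp * v^(k-k01-kp) = v^(k-k01) := by
        rw [← pow_add, Nat.add_sub_cancel' (Nat.lt_succ_iff.mp (Finset.mem_range.mp hkp))]
      calc ((1/2:ℝ)^k * (k.choose k01 : ℝ) * Q k01 k0 kp) *
            ((1 - (cp*v^kp)*(cm*v^(k-k01-kp))) * ((c0*u^k0)*(c1*u^(k01-k0))))
          = ((1/2:ℝ)^k * (k.choose k01 : ℝ) *
              ((1 - cp*cm*(v^kp*v^(k-k01-kp))) * (c0*c1*(u^k0*u^(k01-k0))))) * Q k01 k0 kp := by
            ring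
        _ = _ := by rw [h1, h2]
    rw [hstep]
    simp only [← Finset.mul_sum]
    rw [hQsum k01 hk01, mul_one]
  rw [Finset.sum_congr rfl key]
  have hsplit : ∀ k01 ∈ range (k+1),
      (1/2:ℝ)^k * (k.choose k01 : ℝ) * ((1 - cp*cm*v^(k-k01)) * (c0*c1*u^k01))
      = (c0*c1*(1/2:ℝ)^k) * ((k.choose k01 : ℝ) * u^k01 * 1^(k-k01))
        - (c0*c1*cp*cm*(1/2:ℝ)^k) * ((k.choose k01 : ℝ) * u^k01 * v^(k-k01)) := by
    intro k01 _; ring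
  rw [Finset.sum_congr rfl hsplit, Finset.sum_sub_distrib, ← Finset.mul_sum, ← Finset.mul_sum,
    bin_sum, bin_sum]
  have e1 : (u+(1:ℝ))/2 = (1/2) * (u+1) := by ring
  have e2 : (u+v)/2 = (1/2:ℝ) * (u+v) := by ring
  rw [e1, e2, mul_pow, mul_pow]
  ring

/-- Four-detector setup II with η0 = η1 = ηA, η+ = η- = ηB: for any Born-rule
conditional distribution Q(k0,k+|k01), the probabilities that Bob reports a
measurement in basis 0 (resp. basis 1) are
(1-d+)(1-d-)(1-ηB/2)^k - ∏(1-dᵢ)(1-(ηA+ηB)/2)^k and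
(1-d0)(1-d1)(1-ηA/2)^k - ∏(1-dᵢ)(1-(ηA+ηB)/2)^k, independently of ρ. -/
theorem stmt_19 (k : ℕ) (ηA ηB d0 d1 dp dm : ℝ)
    (hA : ηA ∈ Set.Ioo (0:ℝ) 1) (hB : ηB ∈ Set.Ioo (0:ℝ) 1)
    (hd0 : d0 ∈ Set.Ico (0:ℝ) 1) (hd1 : d1 ∈ Set.Ico (0:ℝ) 1)
    (hdp : dp ∈ Set.Ico (0:ℝ) 1) (hdm : dm ∈ Set.Ico (0:ℝ) 1)
    (Q : ℕ → ℕ → ℕ → ℝ)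
    (hQnn : ∀ k01 k0 kp, 0 ≤ Q k01 k0 kp)
    (hQsum : ∀ k01 ∈ Finset.range (k+1),
      ∑ k0 ∈ Finset.range (k01+1), ∑ kp ∈ Finset.range (k-k01+1),
        Q k01 k0 kp = 1) :
    (∑ k01 ∈ Finset.range (k+1), ∑ k0 ∈ Finset.range (k01+1),
        ∑ kp ∈ Finset.range (k-k01+1),
        ((1/2:ℝ)^k * (k.choose k01 : ℝ) * Q k01 k0 kp) *
          ((1 - ((1-d0)*(1-ηA)^k0) * ((1-d1)*(1-ηA)^(k01-k0))) *
            (((1-dp)*(1-ηB)^kp) * ((1-dm)*(1-ηB)^(k-k01-kp))))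
      = (1-dp)*(1-dm)*(1-ηB/2)^k
        - (1-d0)*(1-d1)*(1-dp)*(1-dm)*(1-(ηA+ηB)/2)^k)
    ∧
    (∑ k01 ∈ Finset.range (k+1), ∑ k0 ∈ Finset.range (k01+1),
        ∑ kp ∈ Finset.range (k-k01+1),
        ((1/2:ℝ)^k * (k.choose k01 : ℝ) * Q k01 k0 kp) *
          ((1 - ((1-dp)*(1-ηB)^kp) * ((1-dm)*(1-ηB)^(k-k01-kp))) *
            (((1-d0)*(1-ηA)^k0) * ((1-d1)*(1-ηA)^(k01-k0))))
      = (1-d0)*(1-d1)*(1-ηA/2)^k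
        - (1-d0)*(1-d1)*(1-dp)*(1-dm)*(1-(ηA+ηB)/2)^k) := by
  constructor
  · have h := arm_sum k (1-ηA) (1-ηB) (1-d0) (1-d1) (1-dp) (1-dm) Q hQsum
    rw [h]
    have e1 : ((1:ℝ)+(1-ηB))/2 = 1-ηB/2 := by ring
    have e2 : ((1-ηA)+(1-ηB))/2 = 1-(ηA+ηB)/2 := by ring
    rw [e1, e2]
  · have h := arm_sum' k (1-ηA) (1-ηB) (1-d0) (1-d1) (1-dp) (1-dm) Q hQsum
    rw [h]
    have e1 : ((1-ηA)+(1:ℝ))/2 = 1-ηA/2 := by ring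
    have e2 : ((1-ηA)+(1-ηB))/2 = 1-(ηA+ηB)/2 := by ring
    rw [e1, e2]
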